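/- Let 𝕂 = ℝ or ℂ and n ≥ 2, and let X^1, …, X^n, Y be 𝕂-analytic functions of (x,y) ∈ 𝕂^n × 𝕂 near the origin with nonvanishing Jacobian determinant Δ. Then for all indices j1, j2, j3, k1 ∈ {1, 2, …, n+1}, the square functions satisfy the cross-differentiation relations ∂(□_{x^{j1}x^{j2}}^{k1})/∂x^{j3} − ∂(□_{x^{j1}x^{j3}}^{k1})/∂x^{j2} = − Σ_{k2=1}^{n+1} □_{x^{j1}x^{j2}}^{k2} □_{x^{j3}x^{k2}}^{k1} + Σ_{k2=1}^{n+1} □_{x^{j1}x^{j3}}^{k2} □_{x^{j2}x^{k2}}^{k1} (with the convention x^{n+1} ≡ y). -/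

import Mathlib

noncomputable section
open scoped BigOperators

/-- Points (x, y) ∈ 𝕂ⁿ × 𝕂. -/
abbrev Pt (𝕂 : Type) (n : ℕ) := (Fin n → 𝕂) × 𝕂

variable {𝕂 : Type} [RCLike 𝕂] {n : ℕ}

/-- Direction for differentiation w.r.t. x^k, k ∈ Fin (n+1), convention x^{n+1} ≡ y. -/
def dirv (𝕂 : Type) [RCLike 𝕂] (n : ℕ) (k : Fin (n+1)) : Pt 𝕂 n :=
  if h : (k : ℕ) < n then (Pi.single (⟨k, h⟩ : Fin n) 1, 0) else (0, 1)

/-- ∂f/∂x^k, k ∈ Fin (n+1), with x^{n+1} ≡ y. -/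
def pd1 (f : Pt 𝕂 n → 𝕂) (k : Fin (n+1)) (z : Pt 𝕂 n) : 𝕂 := fderiv 𝕂 f z (dirv 𝕂 n k)

/-- ∂²f/∂x^{j1}∂x^{j2}. -/
def pd2 (f : Pt 𝕂 n → 𝕂) (j1 j2 : Fin (n+1)) (z : Pt 𝕂 n) : 𝕂 :=
  pd1 (fun w => pd1 f j1 w) j2 z

/-- The combined family X¹, …, Xⁿ, X^{n+1} := Y. -/
def ZZ (Xf : Fin n → Pt 𝕂 n → 𝕂) (Yf : Pt 𝕂 n → 𝕂) : Fin (n+1) → Pt 𝕂 n → 𝕂 :=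
  Fin.snoc Xf Yf

/-- The Jacobian matrix (∂Xⁱ/∂x^k)_{1 ≤ i,k ≤ n+1}. -/
def jac (Xf : Fin n → Pt 𝕂 n → 𝕂) (Yf : Pt 𝕂 n → 𝕂) (z : Pt 𝕂 n) :
    Matrix (Fin (n+1)) (Fin (n+1)) 𝕂 :=
  Matrix.of fun i k => pd1 (ZZ Xf Yf i) k z

/-- The Jacobian determinant Δ. -/
def Δdet (Xf : Fin n → Pt 𝕂 n → 𝕂) (Yf : Pt 𝕂 n → 𝕂) (z : Pt 𝕂 n) : 𝕂 :=
  (jac Xf Yf z).det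

/-- The modified Jacobian: column k1 is replaced by the second-order derivatives
∂²Xⁱ/∂x^{j1}∂x^{j2}. -/
def jacMod (Xf : Fin n → Pt 𝕂 n → 𝕂) (Yf : Pt 𝕂 n → 𝕂) (j1 j2 k1 : Fin (n+1))
    (z : Pt 𝕂 n) : Matrix (Fin (n+1)) (Fin (n+1)) 𝕂 :=
  Matrix.of fun i k => if k = k1 then pd2 (ZZ Xf Yf i) j1 j2 z else pd1 (ZZ Xf Yf i) k z

/-- The square function □_{x^{j1}x^{j2}}^{k1} := Δ_{k1}[j1,j2]/Δ. -/
def sqf (Xf : Fin n → Pt 𝕂 n → 𝕂) (Yf : Pt 𝕂 n → 𝕂) (j1 j2 k1 : Fin (n+1))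
    (z : Pt 𝕂 n) : 𝕂 :=
  (jacMod Xf Yf j1 j2 k1 z).det / Δdet Xf Yf z

/-! ### Auxiliary lemmas -/

lemma analyticOnNhd_pd1 {f : Pt 𝕂 n → 𝕂} {W : Set (Pt 𝕂 n)}
    (hf : AnalyticOnNhd 𝕂 f W) (k : Fin (n+1)) :
    AnalyticOnNhd 𝕂 (pd1 f k) W := fun z hz =>
  ((ContinuousLinearMap.apply 𝕂 𝕂 (dirv 𝕂 n k)).analyticAt _).comp ((hf.fderiv) z hz)

lemma analyticAt_det' {m : ℕ} {M : Pt 𝕂 n → Matrix (Fin m) (Fin m) 𝕂} {z : Pt 𝕂 n}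
    (h : ∀ i j, AnalyticAt 𝕂 (fun w => M w i j) z) :
    AnalyticAt 𝕂 (fun w => (M w).det) z := by
  simp only [Matrix.det_apply']
  exact Finset.analyticAt_fun_sum _ fun σ _ =>
    analyticAt_const.mul (Finset.analyticAt_fun_prod _ fun i _ => h (σ i) i)

lemma pd1_congr {f g : Pt 𝕂 n → 𝕂} {z : Pt 𝕂 n} (h : f =ᶠ[nhds z] g) (k : Fin (n+1)) :
    pd1 f k z = pd1 g k z := by
  unfold pd1; rw [h.fderiv_eq]

lemma pd1_sum {ι : Type*} (s : Finset ι) (f : ι → Pt 𝕂 n → 𝕂) {z : Pt 𝕂 n}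
    (h : ∀ i ∈ s, DifferentiableAt 𝕂 (f i) z) (k : Fin (n+1)) :
    pd1 (fun w => ∑ i ∈ s, f i w) k z = ∑ i ∈ s, pd1 (f i) k z := by
  unfold pd1; rw [fderiv_fun_sum h]; simp

lemma pd1_mul {f g : Pt 𝕂 n → 𝕂} {z : Pt 𝕂 n}
    (hf : DifferentiableAt 𝕂 f z) (hg : DifferentiableAt 𝕂 g z) (k : Fin (n+1)) :
    pd1 (fun w => f w * g w) k z = pd1 f k z * g z + f z * pd1 g k z := by
  unfold pd1; rw [fderiv_fun_mul hf hg]; simp [smul_eq_mul]; ring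

lemma pd2_eq_fderiv2 {f : Pt 𝕂 n → 𝕂} {z : Pt 𝕂 n} (hf : AnalyticAt 𝕂 f z) (j1 j2 : Fin (n+1)) :
    pd2 f j1 j2 z = fderiv 𝕂 (fderiv 𝕂 f) z (dirv 𝕂 n j2) (dirv 𝕂 n j1) := by
  have hd : DifferentiableAt 𝕂 (fderiv 𝕂 f) z := hf.fderiv.differentiableAt
  have h1 : (fun w => pd1 f j1 w)
      = (ContinuousLinearMap.apply 𝕂 𝕂 (dirv 𝕂 n j1)) ∘ (fderiv 𝕂 f) := rfl
  show fderiv 𝕂 (fun w => pd1 f j1 w) z (dirv 𝕂 n j2) = _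
  rw [h1, fderiv_comp z (ContinuousLinearMap.differentiableAt _) hd,
    ContinuousLinearMap.fderiv]
  simp

lemma pd2_symm {f : Pt 𝕂 n → 𝕂} {z : Pt 𝕂 n} (hf : AnalyticAt 𝕂 f z) (j1 j2 : Fin (n+1)) :
    pd2 f j1 j2 z = pd2 f j2 j1 z := by
  rw [pd2_eq_fderiv2 hf, pd2_eq_fderiv2 hf]
  exact ((hf.contDiffAt : ContDiffAt 𝕂 2 f z).isSymmSndFDerivAt (by simp)) _ _

lemma analyticOnNhd_ZZ {Xf : Fin n → Pt 𝕂 n → 𝕂} {Yf : Pt 𝕂 n → 𝕂} {W : Set (Pt 𝕂 n)}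
    (hX : ∀ l, AnalyticOnNhd 𝕂 (Xf l) W) (hY : AnalyticOnNhd 𝕂 Yf W)
    (i : Fin (n+1)) : AnalyticOnNhd 𝕂 (ZZ Xf Yf i) W := by
  induction i using Fin.lastCases with
  | last => simpa [ZZ] using hY
  | cast l => simpa [ZZ] using hX l

lemma cramer_sqf {Xf : Fin n → Pt 𝕂 n → 𝕂} {Yf : Pt 𝕂 n → 𝕂} {z : Pt 𝕂 n}
    (hΔz : Δdet Xf Yf z ≠ 0) (a b i : Fin (n+1)) :
    ∑ k, pd1 (ZZ Xf Yf i) k z * sqf Xf Yf a b k z = pd2 (ZZ Xf Yf i) a b z := by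
  set bv : Fin (n+1) → 𝕂 := fun i => pd2 (ZZ Xf Yf i) a b z with hbv
  have hup : ∀ k, jacMod Xf Yf a b k z = (jac Xf Yf z).updateCol k bv := by
    intro k; ext i j
    simp [jacMod, jac, Matrix.updateCol_apply, bv]
  have hsq : ∀ k, sqf Xf Yf a b k z = Matrix.cramer (jac Xf Yf z) bv k / Δdet Xf Yf z := by
    intro k; rw [sqf, hup, Matrix.cramer_apply]
  have h := congrFun (Matrix.mulVec_cramer (jac Xf Yf z) bv) i
  simp only [Matrix.mulVec, dotProduct, Pi.smul_apply, smul_eq_mul] at h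
  have hj : ∀ k, jac Xf Yf z i k = pd1 (ZZ Xf Yf i) k z := fun k => rfl
  calc ∑ k, pd1 (ZZ Xf Yf i) k z * sqf Xf Yf a b k z
      = (∑ k, jac Xf Yf z i k * Matrix.cramer (jac Xf Yf z) bv k) / Δdet Xf Yf z := by
        rw [Finset.sum_div]
        exact Finset.sum_congr rfl fun k _ => by rw [hsq k, hj, mul_div_assoc]
    _ = (Δdet Xf Yf z * bv i) / Δdet Xf Yf z := by rw [h]; rfl
    _ = bv i := by field_simp

/-- The square functions of analytic X¹, …, Xⁿ, Y with nonvanishing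
Jacobian determinant satisfy the cross-differentiation relations
`(□_{x^{j1}x^{j2}}^{k1})_{x^{j3}} − (□_{x^{j1}x^{j3}}^{k1})_{x^{j2}}
  = −Σ_{k2} □_{x^{j1}x^{j2}}^{k2} □_{x^{j3}x^{k2}}^{k1}
    + Σ_{k2} □_{x^{j1}x^{j3}}^{k2} □_{x^{j2}x^{k2}}^{k1}`. -/
theorem square_functions_cross_differentiation
    {𝕂 : Type} [RCLike 𝕂] {n : ℕ} (hn : 2 ≤ n)
    (W : Set (Pt 𝕂 n)) (hW : IsOpen W) (hW0 : (0 : Pt 𝕂 n) ∈ W)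
    (Xf : Fin n → Pt 𝕂 n → 𝕂) (Yf : Pt 𝕂 n → 𝕂)
    (hX : ∀ l, AnalyticOnNhd 𝕂 (Xf l) W) (hY : AnalyticOnNhd 𝕂 Yf W)
    (hΔ : ∀ z ∈ W, Δdet Xf Yf z ≠ 0) :
    ∀ z ∈ W, ∀ j1 j2 j3 k1 : Fin (n+1),
      pd1 (sqf Xf Yf j1 j2 k1) j3 z - pd1 (sqf Xf Yf j1 j3 k1) j2 z
        = - (∑ k2, sqf Xf Yf j1 j2 k2 z * sqf Xf Yf j3 k2 k1 z)
          + ∑ k2, sqf Xf Yf j1 j3 k2 z * sqf Xf Yf j2 k2 k1 z := by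
  intro z hz j1 j2 j3 k1
  have hZ : ∀ i, AnalyticOnNhd 𝕂 (ZZ Xf Yf i) W := analyticOnNhd_ZZ hX hY
  have hJ : ∀ i k, AnalyticOnNhd 𝕂 (pd1 (ZZ Xf Yf i) k) W := fun i k =>
    analyticOnNhd_pd1 (hZ i) k
  have hJ2 : ∀ i a b, AnalyticOnNhd 𝕂 (pd2 (ZZ Xf Yf i) a b) W := fun i a b =>
    analyticOnNhd_pd1 (analyticOnNhd_pd1 (hZ i) a) b
  have hΔa : ∀ w ∈ W, AnalyticAt 𝕂 (Δdet Xf Yf) w := by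
    intro w hw
    exact analyticAt_det' (M := fun u => jac Xf Yf u) (fun i j => (hJ i j) w hw)
  have hS : ∀ a b k, ∀ w ∈ W, AnalyticAt 𝕂 (sqf Xf Yf a b k) w := by
    intro a b k w hw
    have hnum : AnalyticAt 𝕂 (fun u => (jacMod Xf Yf a b k u).det) w := by
      apply analyticAt_det'
      intro i j
      by_cases h : j = k
      · simpa [jacMod, h] using (hJ2 i a b) w hw
      · simpa [jacMod, h] using (hJ i j) w hw
    exact hnum.div (hΔa w hw) (hΔ w hw)
  have key : ∀ (a b c : Fin (n+1)) (i : Fin (n+1)),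
      pd1 (pd2 (ZZ Xf Yf i) a b) c z
        = ∑ k, (pd2 (ZZ Xf Yf i) k c z * sqf Xf Yf a b k z
            + pd1 (ZZ Xf Yf i) k z * pd1 (sqf Xf Yf a b k) c z) := by
    intro a b c i
    have hCram : (fun w => ∑ k, pd1 (ZZ Xf Yf i) k w * sqf Xf Yf a b k w)
        =ᶠ[nhds z] pd2 (ZZ Xf Yf i) a b := by
      filter_upwards [hW.mem_nhds hz] with w hw
      exact cramer_sqf (hΔ w hw) a b i
    rw [← pd1_congr hCram c,
      pd1_sum Finset.univ (fun k w => pd1 (ZZ Xf Yf i) k w * sqf Xf Yf a b k w)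
        (fun k _ => ((hJ i k z hz).differentiableAt.mul
          ((hS a b k z hz).differentiableAt))) c]
    refine Finset.sum_congr rfl fun k _ => ?_
    exact pd1_mul (hJ i k z hz).differentiableAt (hS a b k z hz).differentiableAt c
  have hsymm3 : ∀ i, pd1 (pd2 (ZZ Xf Yf i) j1 j2) j3 z = pd1 (pd2 (ZZ Xf Yf i) j1 j3) j2 z := by
    intro i
    exact pd2_symm ((hJ i j1) z hz) j2 j3
  have e4 : ∀ (c : Fin (n+1)) k i, pd2 (ZZ Xf Yf i) k c z
      = ∑ m, pd1 (ZZ Xf Yf i) m z * sqf Xf Yf c k m z := by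
    intro c k i
    rw [pd2_symm ((hZ i) z hz) k c]
    exact (cramer_sqf (hΔ z hz) c k i).symm
  set v : Fin (n+1) → 𝕂 := fun m =>
    pd1 (sqf Xf Yf j1 j2 m) j3 z - pd1 (sqf Xf Yf j1 j3 m) j2 z
      + ∑ k, sqf Xf Yf j1 j2 k z * sqf Xf Yf j3 k m z
      - ∑ k, sqf Xf Yf j1 j3 k z * sqf Xf Yf j2 k m z with hv_def
  have hv : ∀ i, ∑ m, pd1 (ZZ Xf Yf i) m z * v m = 0 := by
    intro i
    have E := (key j1 j2 j3 i).symm.trans ((hsymm3 i).trans (key j1 j3 j2 i))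
    simp only [e4 j3, e4 j2] at E
    have h1 : ∑ k, (∑ m, pd1 (ZZ Xf Yf i) m z * sqf Xf Yf j3 k m z) * sqf Xf Yf j1 j2 k z
        = ∑ m, pd1 (ZZ Xf Yf i) m z * (∑ k, sqf Xf Yf j1 j2 k z * sqf Xf Yf j3 k m z) := by
      simp only [Finset.sum_mul, Finset.mul_sum]
      rw [Finset.sum_comm]
      exact Finset.sum_congr rfl fun m _ => Finset.sum_congr rfl fun k _ => by ring
    have h2 : ∑ k, (∑ m, pd1 (ZZ Xf Yf i) m z * sqf Xf Yf j2 k m z) * sqf Xf Yf j1 j3 k z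
        = ∑ m, pd1 (ZZ Xf Yf i) m z * (∑ k, sqf Xf Yf j1 j3 k z * sqf Xf Yf j2 k m z) := by
      simp only [Finset.sum_mul, Finset.mul_sum]
      rw [Finset.sum_comm]
      exact Finset.sum_congr rfl fun m _ => Finset.sum_congr rfl fun k _ => by ring
    calc (∑ m, pd1 (ZZ Xf Yf i) m z * v m)
        = (∑ k, ((∑ m, pd1 (ZZ Xf Yf i) m z * sqf Xf Yf j3 k m z) * sqf Xf Yf j1 j2 k z
              + pd1 (ZZ Xf Yf i) k z * pd1 (sqf Xf Yf j1 j2 k) j3 z))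
          - (∑ k, ((∑ m, pd1 (ZZ Xf Yf i) m z * sqf Xf Yf j2 k m z) * sqf Xf Yf j1 j3 k z
              + pd1 (ZZ Xf Yf i) k z * pd1 (sqf Xf Yf j1 j3 k) j2 z)) := by
          simp only [hv_def, mul_add, mul_sub, Finset.sum_add_distrib, Finset.sum_sub_distrib]
          rw [h1, h2]
          ring
      _ = 0 := by rw [E, sub_self]
  have hvec : Matrix.mulVec (jac Xf Yf z) v = 0 := by
    funext i
    simpa [Matrix.mulVec, dotProduct, jac] using hv i
  have hu : IsUnit (jac Xf Yf z).det := isUnit_iff_ne_zero.mpr (hΔ z hz)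
  have hv0 : v = 0 := by
    have h2 := congrArg (fun u => Matrix.mulVec (jac Xf Yf z)⁻¹ u) hvec
    simpa [Matrix.mulVec_mulVec, Matrix.nonsing_inv_mul _ hu] using h2
  have hk1 := congrFun hv0 k1
  simp only [hv_def, Pi.zero_apply] at hk1
  linear_combination hk1
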